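/- Let $L : \mathbb{R} \to M_N(\mathbb{R})$ and $B : \mathbb{R} \to M_N(\mathbb{R})$ be continuously differentiable with $\dot L(t) = L(t)B(t) - B(t)L(t)$ for all $t$. Then for every $k \in \mathbb{N}$, the trace $\operatorname{tr}(L(t)^k)$ is constant in $t$; in particular the characteristic polynomial of $L(t)$, and hence the spectrum of $L(t)$, is independent of $t$. -/

import Mathlib

open Matrix Finset Polynomial

lemma lax_det_updateColumn_trace {n : ℕ} (A C : Matrix (Fin n) (Fin n) ℝ) :
    ∑ i, (A.updateCol i (fun r => C r i)).det = Matrix.trace (adjugate A * C) := by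
  simp_rw [← cramer_apply, cramer_eq_adjugate_mulVec, Matrix.trace, diag_apply, mul_apply, mulVec]
  rfl

/-- Entrywise differentiability gives differentiability of the determinant, with derivative
`trace (adjugate M * M')`. -/
lemma lax_hasDerivAt_det {n : ℕ} (M : ℝ → Matrix (Fin n) (Fin n) ℝ)
    (M' : Matrix (Fin n) (Fin n) ℝ) (t : ℝ)
    (h : ∀ i j, HasDerivAt (fun s => M s i j) (M' i j) t) :
    HasDerivAt (fun s => (M s).det) (Matrix.trace (adjugate (M t) * M')) t := by
  have key : HasDerivAt (fun s => (M s).det)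
      (∑ σ : Equiv.Perm (Fin n), ((Equiv.Perm.sign σ : ℤ) : ℝ) *
        ∑ i, (∏ j ∈ univ.erase i, M t (σ j) j) • (M' (σ i) i)) t := by
    simp_rw [Matrix.det_apply']
    exact HasDerivAt.fun_sum fun σ _ =>
      ((HasDerivAt.fun_finsetProd fun i _ => h (σ i) i).const_mul _)
  convert key using 1
  rw [← lax_det_updateColumn_trace]
  simp_rw [Matrix.det_apply']
  rw [Finset.sum_comm]
  refine Finset.sum_congr rfl fun σ _ => ?_
  rw [mul_sum]
  refine Finset.sum_congr rfl fun i _ => ?_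
  rw [smul_eq_mul, ← Finset.mul_prod_erase univ _ (Finset.mem_univ i),
    Matrix.updateCol_self]
  have : ∏ j ∈ univ.erase i, (M t).updateCol i (fun r => M' r i) (σ j) j
      = ∏ j ∈ univ.erase i, M t (σ j) j := by
    refine Finset.prod_congr rfl fun j hj => ?_
    rw [Matrix.updateCol_apply, if_neg (Finset.mem_erase.mp hj).1]
  rw [this]; ring

lemma lax_eval_charpoly {n : ℕ} (M : Matrix (Fin n) (Fin n) ℝ) (x : ℝ) :
    M.charpoly.eval x = (x • (1 : Matrix (Fin n) (Fin n) ℝ) - M).det := by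
  rw [Matrix.charpoly, _root_.eval_det, matPolyEquiv_charmatrix]
  simp [smul_one_eq_diagonal, Matrix.scalar]
  rfl

theorem lax_isospectral (N : ℕ)
    (L B : ℝ → Matrix (Fin N) (Fin N) ℝ)
    (hLcont : ∀ i j, Continuous fun t => L t i j)
    (hBcont : ∀ i j, Continuous fun t => B t i j)
    (hLax : ∀ t i j, HasDerivAt (fun s => L s i j)
      ((L t * B t - B t * L t) i j) t) :
    ∀ s t : ℝ,
      (∀ k : ℕ, Matrix.trace ((L s) ^ k) = Matrix.trace ((L t) ^ k)) ∧
      (L s).charpoly = (L t).charpoly ∧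
      spectrum ℝ (L s) = spectrum ℝ (L t) := by
  -- entrywise derivative of powers of `L`
  have hpow : ∀ (k : ℕ) (t : ℝ) (i j : Fin N),
      HasDerivAt (fun s => (L s ^ k) i j)
        ((L t ^ k * B t - B t * L t ^ k) i j) t := by
    intro k
    induction k with
    | zero =>
      intro t i j
      simp only [pow_zero, one_mul, mul_one, sub_self, Matrix.zero_apply]
      exact hasDerivAt_const t _
    | succ k ih =>
      intro t i j
      have h1 : HasDerivAt (fun s => ∑ m, (L s ^ k) i m * L s m j)
          (∑ m, (((L t ^ k * B t - B t * L t ^ k) i m) * L t m j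
            + (L t ^ k) i m * ((L t * B t - B t * L t) m j))) t :=
        HasDerivAt.fun_sum fun m _ => (ih t i m).mul (hLax t m j)
      have h2 : (fun s => (L s ^ (k + 1)) i j) = fun s => ∑ m, (L s ^ k) i m * L s m j := by
        funext s
        rw [pow_succ, Matrix.mul_apply]
      rw [h2]
      convert h1 using 1
      have : (L t ^ (k + 1) * B t - B t * L t ^ (k + 1)) =
          (L t ^ k * B t - B t * L t ^ k) * L t + L t ^ k * (L t * B t - B t * L t) := by
        rw [pow_succ]; noncomm_ring
      rw [this]
      simp [Matrix.add_apply, Matrix.mul_apply, Finset.sum_add_distrib]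
  -- constancy of traces of powers
  have htrace : ∀ (k : ℕ) (s t : ℝ),
      Matrix.trace (L s ^ k) = Matrix.trace (L t ^ k) := by
    intro k s t
    have hd : ∀ u : ℝ, HasDerivAt (fun r => Matrix.trace (L r ^ k)) 0 u := by
      intro u
      have := HasDerivAt.fun_sum (u := (univ : Finset (Fin N)))
        (fun i _ => hpow k u i i)
      have h0 : ∑ i, (L u ^ k * B u - B u * L u ^ k) i i = 0 := by
        have : Matrix.trace (L u ^ k * B u - B u * L u ^ k) = 0 := by
          rw [Matrix.trace_sub, Matrix.trace_mul_comm, sub_self]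
        simpa [Matrix.trace, Matrix.diag_apply] using this
      rw [h0] at this
      simpa [Matrix.trace, Matrix.diag_apply] using this
    exact is_const_of_deriv_eq_zero (fun x => (hd x).differentiableAt)
      (fun x => (hd x).deriv) s t
  -- constancy of `det (x • 1 - L t)`
  have hdet : ∀ (x : ℝ) (s t : ℝ),
      (x • (1 : Matrix (Fin N) (Fin N) ℝ) - L s).det
        = (x • (1 : Matrix (Fin N) (Fin N) ℝ) - L t).det := by
    intro x s t
    have hd : ∀ u : ℝ, HasDerivAt
        (fun r => (x • (1 : Matrix (Fin N) (Fin N) ℝ) - L r).det) 0 u := by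
      intro u
      have hentry : ∀ i j, HasDerivAt
          (fun r => (x • (1 : Matrix (Fin N) (Fin N) ℝ) - L r) i j)
          ((-(L u * B u - B u * L u)) i j) u := by
        intro i j
        have := (hLax u i j).const_sub ((x • (1 : Matrix (Fin N) (Fin N) ℝ)) i j)
        simpa [Matrix.sub_apply, Matrix.neg_apply] using this
      have := lax_hasDerivAt_det (fun r => x • (1 : Matrix (Fin N) (Fin N) ℝ) - L r)
        (-(L u * B u - B u * L u)) u hentry
      set A := x • (1 : Matrix (Fin N) (Fin N) ℝ) - L u with hA
      have hcomm : adjugate A * L u = L u * adjugate A := by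
        have h1 : adjugate A * A = A * adjugate A := by
          rw [Matrix.adjugate_mul, Matrix.mul_adjugate]
        have h2 : adjugate A * (x • (1 : Matrix (Fin N) (Fin N) ℝ)) =
            (x • (1 : Matrix (Fin N) (Fin N) ℝ)) * adjugate A := by
          simp [Matrix.mul_smul, Matrix.smul_mul]
        rw [hA] at h1
        rw [Matrix.mul_sub, Matrix.sub_mul, h2] at h1
        rw [← hA] at h1
        linear_combination (norm := noncomm_ring) -h1
      have hzero : Matrix.trace (adjugate A * -(L u * B u - B u * L u)) = 0 := by
        have e1 : adjugate A * -(L u * B u - B u * L u)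
            = adjugate A * B u * L u - adjugate A * L u * B u := by
          noncomm_ring
        rw [e1, Matrix.trace_sub, hcomm, Matrix.trace_mul_comm (adjugate A * B u) (L u),
          Matrix.mul_assoc, sub_self]
      rwa [hzero] at this
    exact is_const_of_deriv_eq_zero (fun y => (hd y).differentiableAt)
      (fun y => (hd y).deriv) s t
  intro s t
  have hcp : (L s).charpoly = (L t).charpoly := by
    apply Polynomial.funext
    intro x
    rw [lax_eval_charpoly, lax_eval_charpoly, hdet x s t]
  refine ⟨fun k => htrace k s t, hcp, ?_⟩
  ext x
  rw [spectrum.mem_iff, spectrum.mem_iff, Algebra.algebraMap_eq_smul_one, not_iff_not,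
    Matrix.isUnit_iff_isUnit_det, Matrix.isUnit_iff_isUnit_det,
    isUnit_iff_ne_zero, isUnit_iff_ne_zero, hdet x s t]
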